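/- Let n ≥ 1. For every binary string K = (k₁,…,kₙ) ∈ {0,1}ⁿ, the operator C_K = c_{kₙ} ⋯ c_{k₂} c_{k₁} equals the rank-one matrix |0…0⟩⟨k₁…kₙ| (the matrix whose only nonzero entry is a 1 in row (0,…,0), column K); in particular C_K is a rank-one partial isometry mapping |k₁…kₙ⟩ to |0…0⟩ and annihilating all other standard basis vectors. -/

import Mathlib

open Matrix Polynomial

/-- Binary strings of length `n`, indexing the `2^n`-dimensional Fock space. -/
abbrev Idx (n : ℕ) := Fin n → Fin 2

/-- Jordan–Wigner creation matrix `aₜ†` for mode `t`: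
`aₜ†|j₁…jₙ⟩ = (−1)^{j₁+⋯+j_{t−1}} |j₁…j_{t−1} 1 j_{t+1}…jₙ⟩` if `jₜ = 0`, and `0` if `jₜ = 1`. -/
noncomputable def adag (n : ℕ) (t : Fin n) : Matrix (Idx n) (Idx n) ℂ :=
  Matrix.of fun J K =>
    if K t = 0 ∧ J = Function.update K t 1
    then (-1 : ℂ) ^ (∑ s ∈ Finset.univ.filter (fun s => s < t), (K s : ℕ))
    else 0

/-- Jordan–Wigner annihilation matrix `aₜ`, the conjugate transpose of `aₜ†`. -/
noncomputable def ann (n : ℕ) (t : Fin n) : Matrix (Idx n) (Idx n) ℂ := (adag n t)ᴴ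

/-- `c_{jₛ}† = aₛaₛ†` if `jₛ = 0` and `aₛ†` if `jₛ = 1`. -/
noncomputable def cdag (n : ℕ) (s : Fin n) (j : Fin 2) : Matrix (Idx n) (Idx n) ℂ :=
  if j = 0 then ann n s * adag n s else adag n s

/-- `c_{kₛ} = aₛaₛ†` if `kₛ = 0` and `aₛ` if `kₛ = 1`. -/
noncomputable def cann (n : ℕ) (s : Fin n) (k : Fin 2) : Matrix (Idx n) (Idx n) ℂ :=
  if k = 0 then ann n s * adag n s else ann n s

/-- `A_{JK} = c_{j₁}† c_{j₂}† ⋯ c_{jₙ}† c_{kₙ} ⋯ c_{k₂} c_{k₁}`. -/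
noncomputable def AJK (n : ℕ) (J K : Idx n) : Matrix (Idx n) (Idx n) ℂ :=
  (((List.finRange n).map fun s => cdag n s (J s)).prod) *
  ((((List.finRange n).reverse).map fun s => cann n s (K s)).prod)

/-- `C_K = c_{kₙ} ⋯ c_{k₂} c_{k₁}`. -/
noncomputable def CK (n : ℕ) (K : Idx n) : Matrix (Idx n) (Idx n) ℂ :=
  (((List.finRange n).reverse).map fun s => cann n s (K s)).prod

/- ### Auxiliary machinery -/

lemma updateInj {n : ℕ} {J L : Idx n} {t : Fin n} (hJ : J t = 0) (hL : L t = 0)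
    (h : Function.update J t 1 = Function.update L t 1) : J = L := by
  funext s
  by_cases hs : s = t
  · subst hs; rw [hJ, hL]
  · have := congrFun h s
    simpa [Function.update_of_ne hs] using this

lemma ann_apply' {n : ℕ} (t : Fin n) (J I : Idx n) :
    ann n t J I = if J t = 0 ∧ I = Function.update J t 1
      then (-1 : ℂ) ^ (∑ s ∈ Finset.univ.filter (fun s => s < t), (J s : ℕ)) else 0 := by
  simp only [ann, conjTranspose_apply, adag, of_apply]
  split <;> simp

lemma aadag_apply {n : ℕ} (t : Fin n) (J L : Idx n) :
    (ann n t * adag n t) J L = if J = L ∧ J t = 0 then 1 else 0 := by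
  rw [Matrix.mul_apply]
  simp only [ann_apply', adag, of_apply]
  by_cases hJ : J t = 0
  · by_cases hJL : J = L
    · subst hJL
      rw [Finset.sum_eq_single (Function.update J t 1)]
      · rw [if_pos ⟨hJ, rfl⟩, if_pos ⟨rfl, hJ⟩, ← pow_add]
        exact Even.neg_one_pow ⟨_, rfl⟩
      · intro I _ hI
        rw [if_neg (fun h => hI h.2), zero_mul]
      · intro h; exact absurd (Finset.mem_univ _) h
    · rw [if_neg (fun h => hJL h.1)]
      apply Finset.sum_eq_zero; intro I _
      by_cases h1 : I = Function.update J t 1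
      · by_cases hL : L t = 0
        · have h2 : I ≠ Function.update L t 1 := fun h2 =>
            hJL (updateInj hJ hL (h1 ▸ h2))
          exact mul_eq_zero_of_right _ (if_neg (fun h => h2 h.2))
        · exact mul_eq_zero_of_right _ (if_neg (fun h => hL h.1))
      · rw [if_neg (fun h => h1 h.2), zero_mul]
  · rw [if_neg (fun h => hJ h.2)]
    apply Finset.sum_eq_zero; intro I _
    rw [if_neg (fun h => hJ h.1), zero_mul]

/-- The invariant satisfied by the partial products of `C_K`. -/
def Pcond (n : ℕ) (K : Idx n) (m : ℕ) (J L : Idx n) : Prop :=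
  (∀ s : Fin n, (s : ℕ) < m → J s = 0 ∧ L s = K s) ∧ (∀ s : Fin n, m ≤ (s : ℕ) → J s = L s)

open scoped Classical in
/-- The matrix given by the invariant `Pcond`. -/
noncomputable def Pm (n : ℕ) (K : Idx n) (m : ℕ) : Matrix (Idx n) (Idx n) ℂ :=
  Matrix.of fun J L => if Pcond n K m J L then 1 else 0

lemma Pm_zero (n : ℕ) (K : Idx n) : Pm n K 0 = 1 := by
  ext J L
  simp only [Pm, of_apply, Matrix.one_apply, Pcond]
  congr 1
  simp only [eq_iff_iff]
  constructor
  · rintro ⟨-, h⟩; funext s; exact h s (Nat.zero_le _)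
  · rintro rfl; exact ⟨fun s hs => absurd hs (Nat.not_lt_zero _), fun s _ => rfl⟩

lemma Pcond_succ_iff0 {n m : ℕ} (hm : m < n) {K : Idx n} (hK : K ⟨m, hm⟩ = 0) (J L : Idx n) :
    Pcond n K (m + 1) J L ↔ (J ⟨m, hm⟩ = 0 ∧ Pcond n K m J L) := by
  set t : Fin n := ⟨m, hm⟩ with ht
  have htm : (t : ℕ) = m := rfl
  constructor
  · rintro ⟨h1, h2⟩
    refine ⟨(h1 t (Nat.lt_succ_self m)).1, fun s hs => h1 s (Nat.lt_succ_of_lt hs),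
      fun s hs => ?_⟩
    rcases Nat.eq_or_lt_of_le hs with hs' | hs'
    · have hse : s = t := Fin.ext hs'.symm
      rw [hse, (h1 t (Nat.lt_succ_self m)).1, (h1 t (Nat.lt_succ_self m)).2, hK]
    · exact h2 s hs'
  · rintro ⟨hJ, h1, h2⟩
    refine ⟨fun s hs => ?_, fun s hs => h2 s (Nat.le_of_succ_le hs)⟩
    rcases Nat.lt_succ_iff_lt_or_eq.mp hs with hs' | hs'
    · exact h1 s hs'
    · have hse : s = t := Fin.ext hs'
      rw [hse]
      exact ⟨hJ, by rw [← h2 t (le_of_eq htm.symm), hJ, hK]⟩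

lemma Pcond_succ_iff1 {n m : ℕ} (hm : m < n) {K : Idx n} (hK : K ⟨m, hm⟩ = 1) (J L : Idx n) :
    Pcond n K (m + 1) J L ↔
      (J ⟨m, hm⟩ = 0 ∧ Pcond n K m (Function.update J ⟨m, hm⟩ 1) L) := by
  set t : Fin n := ⟨m, hm⟩ with ht
  have htm : (t : ℕ) = m := rfl
  constructor
  · rintro ⟨h1, h2⟩
    refine ⟨(h1 t (Nat.lt_succ_self m)).1, fun s hs => ?_, fun s hs => ?_⟩
    · have hst : s ≠ t := fun h => absurd hs (by simp [h, htm])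
      rw [Function.update_of_ne hst]
      exact h1 s (Nat.lt_succ_of_lt hs)
    · rcases Nat.eq_or_lt_of_le hs with hs' | hs'
      · have hse : s = t := Fin.ext hs'.symm
        rw [hse, Function.update_self, (h1 t (Nat.lt_succ_self m)).2, hK]
      · rw [Function.update_of_ne (fun h => absurd hs' (by simp [h, htm]))]
        exact h2 s hs'
  · rintro ⟨hJ, h1, h2⟩
    refine ⟨fun s hs => ?_, fun s hs => ?_⟩
    · rcases Nat.lt_succ_iff_lt_or_eq.mp hs with hs' | hs'
      · have hst : s ≠ t := fun h => absurd hs' (by simp [h, htm])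
        have := h1 s hs'
        rwa [Function.update_of_ne hst] at this
      · have hse : s = t := Fin.ext hs'
        rw [hse]
        refine ⟨hJ, ?_⟩
        have h3 := h2 t (le_of_eq htm.symm)
        rw [Function.update_self] at h3
        rw [← h3, hK]
    · have hst : s ≠ t := fun h => absurd hs (by simp [h, htm])
      have h3 := h2 s (Nat.le_of_succ_le hs)
      rwa [Function.update_of_ne hst] at h3

lemma signSumZero {n m : ℕ} (hm : m < n) {K J L : Idx n}
    (h : Pcond n K m (Function.update J ⟨m, hm⟩ 1) L) :
    ∑ s ∈ Finset.univ.filter (fun s => s < (⟨m, hm⟩ : Fin n)), ((J s : ℕ)) = 0 := by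
  apply Finset.sum_eq_zero
  intro s hs
  have hs' : (s : ℕ) < m := (Finset.mem_filter.mp hs).2
  have hst : s ≠ (⟨m, hm⟩ : Fin n) := fun h' => absurd hs' (by simp [h'])
  have h0 := (h.1 s hs').1
  rw [Function.update_of_ne hst] at h0
  simp [h0]

lemma Pm_step {n m : ℕ} (hm : m < n) (K : Idx n) :
    cann n ⟨m, hm⟩ (K ⟨m, hm⟩) * Pm n K m = Pm n K (m + 1) := by
  set t : Fin n := ⟨m, hm⟩ with ht
  by_cases hK : K t = 0
  · rw [show cann n t (K t) = ann n t * adag n t from if_pos hK]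
    ext J L
    rw [Matrix.mul_apply, Finset.sum_eq_single J]
    · rw [aadag_apply]
      by_cases hJ : J t = 0
      · rw [if_pos ⟨rfl, hJ⟩, one_mul]
        simp only [Pm, of_apply]
        by_cases hP : Pcond n K m J L
        · rw [if_pos hP, if_pos ((Pcond_succ_iff0 hm hK J L).mpr ⟨hJ, hP⟩)]
        · rw [if_neg hP, if_neg (fun h => hP ((Pcond_succ_iff0 hm hK J L).mp h).2)]
      · rw [if_neg (fun h => hJ h.2), zero_mul]
        simp only [Pm, of_apply]
        rw [if_neg (fun h => hJ ((Pcond_succ_iff0 hm hK J L).mp h).1)]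
    · intro I _ hI
      rw [aadag_apply, if_neg (fun h => hI h.1.symm), zero_mul]
    · intro h; exact absurd (Finset.mem_univ _) h
  · have hK1 : K t = 1 := by omega
    rw [show cann n t (K t) = ann n t from if_neg (by rw [hK1]; decide)]
    ext J L
    rw [Matrix.mul_apply, Finset.sum_eq_single (Function.update J t 1)]
    · rw [ann_apply']
      by_cases hJ : J t = 0
      · rw [if_pos ⟨hJ, rfl⟩]
        simp only [Pm, of_apply]
        by_cases hP : Pcond n K m (Function.update J t 1) L
        · rw [if_pos hP, mul_one, if_pos ((Pcond_succ_iff1 hm hK1 J L).mpr ⟨hJ, hP⟩),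
            signSumZero hm hP, pow_zero]
        · rw [if_neg hP, mul_zero,
            if_neg (fun h => hP ((Pcond_succ_iff1 hm hK1 J L).mp h).2)]
      · rw [if_neg (fun h => hJ h.1), zero_mul]
        simp only [Pm, of_apply]
        rw [if_neg (fun h => hJ ((Pcond_succ_iff1 hm hK1 J L).mp h).1)]
    · intro I _ hI
      rw [ann_apply', if_neg (fun h => hI h.2), zero_mul]
    · intro h; exact absurd (Finset.mem_univ _) h

lemma CK_eq_Pm (n : ℕ) (K : Idx n) : CK n K = Pm n K n := by
  have key : ∀ m, m ≤ n →
      ((((List.finRange n).take m).reverse).map fun s => cann n s (K s)).prod = Pm n K m := by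
    intro m
    induction m with
    | zero => intro _; simpa using (Pm_zero n K).symm
    | succ m ih =>
      intro hm
      have hm' : m < n := hm
      have hlen : m < (List.finRange n).length := by simpa using hm'
      rw [List.take_succ, List.getElem?_eq_getElem hlen, List.getElem_finRange,
        Option.toList_some, List.reverse_append, List.reverse_singleton,
        List.singleton_append, List.map_cons, List.prod_cons, ih hm'.le]
      exact Pm_step hm' K
  have h := key n le_rfl
  rwa [List.take_of_length_le (by simp)] at h

lemma Pm_top (n : ℕ) (K : Idx n) :
    Pm n K n = Matrix.single (fun _ => 0) K 1 := by
  ext J L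
  simp only [Pm, Matrix.single, of_apply]
  congr 1
  simp only [eq_iff_iff]
  constructor
  · rintro ⟨h1, -⟩
    exact ⟨funext fun s => ((h1 s s.isLt).1).symm, funext fun s => ((h1 s s.isLt).2).symm⟩
  · rintro ⟨hJ, hL⟩
    exact ⟨fun s _ => ⟨(congrFun hJ s).symm, (congrFun hL s).symm⟩,
      fun s hs => absurd s.isLt (not_lt.mpr hs)⟩

lemma std_mulVec {n : ℕ} (i j : Idx n) (v : Idx n → ℂ) :
    Matrix.single i j (1 : ℂ) *ᵥ v = fun J => if J = i then v j else 0 := by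
  funext J
  rw [Matrix.mulVec, dotProduct]
  simp only [Matrix.single, of_apply]
  by_cases hJ : J = i
  · rw [if_pos hJ, Finset.sum_eq_single j]
    · rw [if_pos ⟨hJ.symm, rfl⟩, one_mul]
    · intro L _ hL
      rw [if_neg (fun h => hL h.2.symm), zero_mul]
    · intro h; exact absurd (Finset.mem_univ _) h
  · rw [if_neg hJ]
    apply Finset.sum_eq_zero; intro L _
    rw [if_neg (fun h => hJ h.1.symm), zero_mul]

/-- `C_K` equals the rank-one matrix `|0…0⟩⟨k₁…kₙ|`; in particular it is a
rank-one partial isometry mapping `|K⟩` to `|0…0⟩` and annihilating the other basis vectors. -/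
theorem CK_eq_stdBasisMatrix (n : ℕ) (hn : 1 ≤ n) (K : Idx n) :
    CK n K = Matrix.single (fun _ => 0) K 1 ∧
    CK n K *ᵥ (fun J => if J = K then (1 : ℂ) else 0) =
      (fun J => if J = (fun _ => (0 : Fin 2)) then (1 : ℂ) else 0) ∧
    ∀ J : Idx n, J ≠ K → CK n K *ᵥ (fun J' => if J' = J then (1 : ℂ) else 0) = 0 := by
  have h : CK n K = Matrix.single (fun _ => 0) K 1 :=
    (CK_eq_Pm n K).trans (Pm_top n K)
  refine ⟨h, ?_, ?_⟩
  · rw [h, std_mulVec]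
    funext J
    simp
  · intro J hJ
    rw [h, std_mulVec]
    funext J'
    simp [Ne.symm hJ]
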